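/- Let A ∈ ℂ^{n×n}, let S ∈ ℂ^{n×n} be invertible with S = S*, let Π ∈ ℂ^{n×m}, let j = diag(I_{m₁}, −I_{m₂}) with m = m₁ + m₂, and let c ∈ ℝ be such that A − c·Iₙ and A* − c·Iₙ are both invertible. Assume A·S − S·A* = i·Π·j·Π*. Then the matrix w := I_m − i·j·Π*·S⁻¹·(A − cIₙ)⁻¹·Π is invertible and w⁻¹ = j·w*·j. -/
import Mathlib

open Matrix

/-- The signature matrix `j = diag(I_{m₁}, −I_{m₂})`. -/
def Jmat (m₁ m₂ : ℕ) : Matrix (Fin m₁ ⊕ Fin m₂) (Fin m₁ ⊕ Fin m₂) ℂ :=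
  Matrix.fromBlocks 1 0 0 (-1)

lemma Jmat_mul_Jmat (m₁ m₂ : ℕ) : Jmat m₁ m₂ * Jmat m₁ m₂ = 1 := by
  simp [Jmat, Matrix.fromBlocks_multiply]

lemma Jmat_conjTranspose (m₁ m₂ : ℕ) : (Jmat m₁ m₂)ᴴ = Jmat m₁ m₂ := by
  simp [Jmat, Matrix.fromBlocks_conjTranspose]

/-- identity (c12), j-unitarity of the transfer matrix function, cf.
[SaSaR, (1.87)]. If `A S − S A* = i Π j Π*` with `S = S*` invertible, `c ∈ ℝ`, and
`A − c Iₙ`, `A* − c Iₙ` invertible, then `w := I − i j Π* S⁻¹ (A − cIₙ)⁻¹ Π` is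
invertible and `w⁻¹ = j w* j`. -/
theorem transfer_matrix_j_unitary {m₁ m₂ n : ℕ}
    (A S : Matrix (Fin n) (Fin n) ℂ) (hS : IsUnit S) (hSh : S = Sᴴ)
    (P : Matrix (Fin n) (Fin m₁ ⊕ Fin m₂) ℂ) (c : ℝ)
    (hA : IsUnit (A - (c : ℂ) • (1 : Matrix (Fin n) (Fin n) ℂ)))
    (hA' : IsUnit (Aᴴ - (c : ℂ) • (1 : Matrix (Fin n) (Fin n) ℂ)))
    (hid : A * S - S * Aᴴ = Complex.I • (P * Jmat m₁ m₂ * Pᴴ))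
    (w : Matrix (Fin m₁ ⊕ Fin m₂) (Fin m₁ ⊕ Fin m₂) ℂ)
    (hw : w = 1 - Complex.I • (Jmat m₁ m₂ * Pᴴ * S⁻¹ * (A - (c : ℂ) • 1)⁻¹ * P)) :
    IsUnit w ∧ w⁻¹ = Jmat m₁ m₂ * wᴴ * Jmat m₁ m₂ := by
  set j := Jmat m₁ m₂ with hj
  set M : Matrix (Fin n) (Fin n) ℂ := A - (c : ℂ) • 1 with hM
  set N : Matrix (Fin n) (Fin n) ℂ := Aᴴ - (c : ℂ) • 1 with hN
  have hMd : IsUnit M.det := (Matrix.isUnit_iff_isUnit_det M).mp hA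
  have hNd : IsUnit N.det := (Matrix.isUnit_iff_isUnit_det N).mp hA'
  have hSd : IsUnit S.det := (Matrix.isUnit_iff_isUnit_det S).mp hS
  have hMM : M * M⁻¹ = 1 := Matrix.mul_nonsing_inv M hMd
  have hMM' : M⁻¹ * M = 1 := Matrix.nonsing_inv_mul M hMd
  have hNN : N * N⁻¹ = 1 := Matrix.mul_nonsing_inv N hNd
  have hNN' : N⁻¹ * N = 1 := Matrix.nonsing_inv_mul N hNd
  have hSS : S * S⁻¹ = 1 := Matrix.mul_nonsing_inv S hSd
  have hSS' : S⁻¹ * S = 1 := Matrix.nonsing_inv_mul S hSd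
  have hSinvH : (S⁻¹)ᴴ = S⁻¹ := by
    rw [Matrix.conjTranspose_nonsing_inv, ← hSh]
  have hMH : Mᴴ = N := by
    rw [hM, hN]
    simp [Matrix.conjTranspose_smul, Complex.conj_ofReal]
  have hMinvH : (M⁻¹)ᴴ = N⁻¹ := by
    rw [Matrix.conjTranspose_nonsing_inv, hMH]
  have hjj : j * j = 1 := Jmat_mul_Jmat m₁ m₂
  have hjH : jᴴ = j := Jmat_conjTranspose m₁ m₂
  have hid' : M * S - S * N = Complex.I • (P * j * Pᴴ) := by
    rw [hM, hN, ← hid]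
    simp [Matrix.sub_mul, Matrix.mul_sub, Matrix.smul_mul, Matrix.mul_smul]
  have key : N⁻¹ * S⁻¹ - S⁻¹ * M⁻¹
      = Complex.I • (S⁻¹ * M⁻¹ * P * j * Pᴴ * (N⁻¹ * S⁻¹)) := by
    have h1 : S⁻¹ * M⁻¹ * (M * S - S * N) * (N⁻¹ * S⁻¹)
        = N⁻¹ * S⁻¹ - S⁻¹ * M⁻¹ := by
      rw [Matrix.mul_sub, Matrix.sub_mul]
      congr 1
      · simp only [Matrix.mul_assoc]
        rw [← Matrix.mul_assoc M⁻¹ M, hMM', Matrix.one_mul, ← Matrix.mul_assoc S⁻¹ S, hSS', Matrix.one_mul]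
      · simp only [Matrix.mul_assoc]
        rw [← Matrix.mul_assoc N N⁻¹, hNN, Matrix.one_mul, hSS, Matrix.mul_one]
    rw [← h1, hid', Matrix.mul_smul, Matrix.smul_mul]
    congr 1
    simp only [Matrix.mul_assoc]
  set X : Matrix (Fin m₁ ⊕ Fin m₂) (Fin m₁ ⊕ Fin m₂) ℂ :=
    j * Pᴴ * S⁻¹ * M⁻¹ * P with hX
  set Y : Matrix (Fin m₁ ⊕ Fin m₂) (Fin m₁ ⊕ Fin m₂) ℂ :=
    j * Pᴴ * N⁻¹ * S⁻¹ * P with hY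
  have hwX : w = 1 - Complex.I • X := hw
  have hjwj : j * wᴴ * j = 1 + Complex.I • Y := by
    rw [hwX]
    have hXH : Xᴴ = Pᴴ * N⁻¹ * S⁻¹ * P * j := by
      rw [hX]
      simp only [Matrix.conjTranspose_mul, hMinvH, hSinvH, hjH,
        Matrix.conjTranspose_conjTranspose]
      simp only [Matrix.mul_assoc]
    rw [Matrix.conjTranspose_sub, Matrix.conjTranspose_smul, Matrix.conjTranspose_one,
      hXH]
    simp only [Complex.star_def, Complex.conj_I, neg_smul, sub_neg_eq_add]
    rw [Matrix.mul_add, Matrix.add_mul, Matrix.mul_one, hjj]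
    congr 1
    rw [Matrix.mul_smul, Matrix.smul_mul, hY]
    congr 1
    simp only [Matrix.mul_assoc]
    rw [hjj, Matrix.mul_one]
  have hXY : Y - X = Complex.I • (X * Y) := by
    have h2 : Y - X = j * Pᴴ * (N⁻¹ * S⁻¹ - S⁻¹ * M⁻¹) * P := by
      rw [Matrix.mul_sub, Matrix.sub_mul, hX, hY]
      simp only [Matrix.mul_assoc]
    rw [h2, key, Matrix.mul_smul, Matrix.smul_mul]
    congr 1
    rw [hX, hY]
    simp only [Matrix.mul_assoc]
  have hmain : w * (j * wᴴ * j) = 1 := by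
    rw [hjwj, hwX]
    have h3 : (1 - Complex.I • X) * (1 + Complex.I • Y)
        = 1 + (Complex.I • (Y - X) - Complex.I • Complex.I • (X * Y)) := by
      simp only [Matrix.sub_mul, Matrix.mul_add, Matrix.one_mul, Matrix.mul_one,
        Matrix.smul_mul, Matrix.mul_smul, smul_sub]
      abel
    rw [h3, hXY, sub_self, add_zero]
  exact ⟨(Matrix.isUnit_iff_isUnit_det w).mpr (Matrix.isUnit_det_of_right_inverse hmain),
    Matrix.inv_eq_right_inv hmain⟩
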